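/- Let u : ℂ → ℝ be a continuous subharmonic function that is harmonic outside a compact set K and bounded above outside K by a constant (in particular u(z) = O(log |z|) with the logarithmic term absent, i.e., u bounded). If u ≤ 0 on ∂W for a closed sector W ⊆ ℂ (intersection of two closed half-planes with a common boundary point) and u(z) = O(log|z|) as z → ∞ inside W, and u is subharmonic on the interior of W, then u ≤ 0 on W, provided the opening angle of W is less than 2π. (Phragmén–Lindelöf principle for sublogarithmic growth in a sector.) -/

import Mathlib

open Set
open Metric Complex

/-- The average of `u` over the circle of radius `r` centered at `z`. -/
noncomputable def circAvg (u : ℂ → ℝ) (z : ℂ) (r : ℝ) : ℝ :=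
  (1 / (2 * Real.pi)) * ∫ θ in (0:ℝ)..(2 * Real.pi), u (z + r * Complex.exp (θ * Complex.I))

/-- The closed sector with vertex `p` spanned by directions with angles in `[α, β]`. -/
noncomputable def sector (p : ℂ) (α β : ℝ) : Set ℂ :=
  {z : ℂ | ∃ r : ℝ, 0 ≤ r ∧ ∃ θ ∈ Icc α β, z = p + r * Complex.exp (θ * Complex.I)}





lemma mean_value {F : ℂ → ℂ} {c : ℂ} {r : ℝ} (hr : 0 < r)
    (hF : ∀ z ∈ Metric.closedBall c r, DifferentiableAt ℂ F z) :
    ∫ θ in (0:ℝ)..(2*Real.pi), F (c + r * Complex.exp (θ * Complex.I))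
      = (2*Real.pi : ℝ) • F c := by
  have hd : DifferentiableOn ℂ F (Metric.closedBall c r) :=
    fun z hz => (hF z hz).differentiableWithinAt
  have h := hd.circleIntegral_sub_inv_smul (Metric.mem_ball_self hr)
  rw [circleIntegral] at h
  simp only [deriv_circleMap, circleMap_sub_center, smul_eq_mul] at h
  have key : ∀ θ : ℝ, circleMap 0 r θ * I * ((circleMap 0 r θ)⁻¹ * F (circleMap c r θ))
      = I * F (circleMap c r θ) := by
    intro θ
    have h0 : circleMap 0 r θ ≠ 0 := by simpa [sub_eq_zero] using sub_ne_zero.mpr (circleMap_ne_center (c := (0:ℂ)) hr.ne' (θ := θ))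
    field_simp
  rw [intervalIntegral.integral_congr (fun θ _ => key θ)] at h
  rw [intervalIntegral.integral_const_mul] at h
  have hI : (I : ℂ) ≠ 0 := I_ne_zero
  have : (∫ θ in (0:ℝ)..(2*Real.pi), F (circleMap c r θ)) = (2 * Real.pi : ℝ) • F c := by
    apply mul_left_cancel₀ hI
    rw [h, Complex.real_smul]
    push_cast
    ring
  simpa [circleMap] using this

lemma circleFun_continuous (c : ℂ) (r : ℝ) :
    Continuous (fun θ : ℝ => c + (r:ℂ) * Complex.exp (θ * Complex.I)) := by
  fun_prop

lemma circAvg_of_holo {F : ℂ → ℂ} {c : ℂ} {r : ℝ} (hr : 0 < r)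
    (hF : ∀ z ∈ Metric.closedBall c r, DifferentiableAt ℂ F z) :
    circAvg (fun z => (F z).re) c r = (F c).re := by
  have hmem : ∀ θ : ℝ, c + (r:ℂ) * Complex.exp (θ * Complex.I) ∈ Metric.closedBall c r := by
    intro θ
    simp only [Metric.mem_closedBall, dist_eq, add_sub_cancel_left]
    rw [norm_mul, Complex.norm_exp]
    simp [abs_of_pos hr]
  have hcont : Continuous (fun θ : ℝ => F (c + (r:ℂ) * Complex.exp (θ * Complex.I))) := by
    rw [continuous_iff_continuousAt]
    intro θ
    exact ContinuousAt.comp (x := θ) (g := F)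
      ((hF _ (hmem θ)).continuousAt) (circleFun_continuous c r).continuousAt
  have hint : IntervalIntegrable (fun θ : ℝ => F (c + (r:ℂ) * Complex.exp (θ * Complex.I)))
      MeasureTheory.volume 0 (2*Real.pi) := hcont.intervalIntegrable _ _
  have h1 := Complex.reCLM.intervalIntegral_comp_comm hint
  have h2 : ∫ θ in (0:ℝ)..(2*Real.pi), F (c + r * Complex.exp (θ * Complex.I))
      = (2*Real.pi : ℝ) • F c := mean_value hr hF
  unfold circAvg
  have h3 : (fun z => (F z).re) ∘ (fun θ : ℝ => c + (r:ℂ) * Complex.exp (θ * Complex.I))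
      = fun θ : ℝ => Complex.reCLM (F (c + (r:ℂ) * Complex.exp (θ * Complex.I))) := rfl
  calc (1 / (2 * Real.pi)) * ∫ θ in (0:ℝ)..(2 * Real.pi), (F (c + r * Complex.exp (θ * Complex.I))).re
      = (1 / (2 * Real.pi)) * Complex.reCLM (∫ θ in (0:ℝ)..(2 * Real.pi), F (c + r * Complex.exp (θ * Complex.I))) := by
        rw [← h1]; rfl
    _ = (1 / (2 * Real.pi)) * ((2*Real.pi) * (F c).re) := by rw [h2]; simp
    _ = (F c).re := by
        field_simp


lemma strict_avg {f : ℝ → ℝ} {M : ℝ} (hf : Continuous f)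
    (hper : Function.Periodic f (2*Real.pi))
    (hle : ∀ θ, f θ ≤ M) {θ₀ : ℝ} (hlt : f θ₀ < M) :
    ∫ θ in (0:ℝ)..(2*Real.pi), f θ < 2*Real.pi * M := by
  have hπ : 0 < Real.pi := Real.pi_pos
  have hshift : ∫ θ in (0:ℝ)..(2*Real.pi), f θ
      = ∫ θ in (θ₀-Real.pi)..(θ₀+Real.pi), f θ := by
    have := hper.intervalIntegral_add_eq (t := 0) (s := θ₀ - Real.pi)
    simp only [zero_add] at this
    rw [this]
    congr 1
    ring
  set g : ℝ → ℝ := fun θ => M - f θ with hg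
  have hgc : Continuous g := continuous_const.sub hf
  have hgnn : ∀ θ, 0 ≤ g θ := fun θ => sub_nonneg.mpr (hle θ)
  have hg0 : 0 < g θ₀ := sub_pos.mpr hlt
  obtain ⟨δ, hδ, hδ2⟩ := Metric.continuousAt_iff.mp hgc.continuousAt (g θ₀ / 2) (by linarith)
  set δ' : ℝ := min (δ/2) Real.pi with hδ'
  have hδ'pos : 0 < δ' := lt_min (by linarith) hπ
  have hδ'le : δ' ≤ Real.pi := min_le_right _ _
  have hmid : ∀ θ ∈ Set.Icc (θ₀ - δ') (θ₀ + δ'), g θ₀ / 2 ≤ g θ := by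
    intro θ hθ
    have : dist θ θ₀ < δ := by
      rw [Real.dist_eq]
      have h1 := hθ.1; have h2 := hθ.2
      have : δ' < δ := lt_of_le_of_lt (min_le_left _ _) (by linarith)
      rw [abs_lt]; constructor <;> linarith
    have := hδ2 this
    rw [Real.dist_eq, abs_lt] at this
    linarith [this.1]
  have hint : ∀ a b : ℝ, IntervalIntegrable g MeasureTheory.volume a b :=
    fun a b => hgc.intervalIntegrable a b
  have hsplit : ∫ θ in (θ₀-Real.pi)..(θ₀+Real.pi), g θ
      = (∫ θ in (θ₀-Real.pi)..(θ₀-δ'), g θ) + (∫ θ in (θ₀-δ')..(θ₀+δ'), g θ)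
        + ∫ θ in (θ₀+δ')..(θ₀+Real.pi), g θ := by
    rw [intervalIntegral.integral_add_adjacent_intervals (hint _ _) (hint _ _),
      intervalIntegral.integral_add_adjacent_intervals (hint _ _) (hint _ _)]
  have h1 : 0 ≤ ∫ θ in (θ₀-Real.pi)..(θ₀-δ'), g θ :=
    intervalIntegral.integral_nonneg (by linarith) (fun x _ => hgnn x)
  have h3 : 0 ≤ ∫ θ in (θ₀+δ')..(θ₀+Real.pi), g θ :=
    intervalIntegral.integral_nonneg (by linarith) (fun x _ => hgnn x)
  have h2 : (2*δ') * (g θ₀ / 2) ≤ ∫ θ in (θ₀-δ')..(θ₀+δ'), g θ := by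
    have := intervalIntegral.integral_mono_on (a := θ₀-δ') (b := θ₀+δ') (by linarith)
      (intervalIntegrable_const) (hint _ _) hmid
    rw [intervalIntegral.integral_const] at this
    calc (2*δ') * (g θ₀ / 2) = (θ₀ + δ' - (θ₀ - δ')) • (g θ₀ / 2) := by
          rw [smul_eq_mul]; ring
      _ ≤ _ := this
  have hgpos : 0 < ∫ θ in (θ₀-Real.pi)..(θ₀+Real.pi), g θ := by
    rw [hsplit]
    have : 0 < (2*δ') * (g θ₀ / 2) := by positivity
    linarith
  have hfg : ∫ θ in (θ₀-Real.pi)..(θ₀+Real.pi), f θ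
      = 2*Real.pi*M - ∫ θ in (θ₀-Real.pi)..(θ₀+Real.pi), g θ := by
    have : ∀ θ, f θ = M - g θ := fun θ => by simp [hg]
    rw [intervalIntegral.integral_congr (fun θ _ => this θ),
      intervalIntegral.integral_sub intervalIntegrable_const (hint _ _),
      intervalIntegral.integral_const, smul_eq_mul]
    ring
  rw [hshift, hfg]
  linarith



noncomputable def Wf (p : ℂ) (φ₀ : ℝ) (z : ℂ) : ℂ :=
  Complex.exp ((-φ₀ : ℝ) * Complex.I) * (z - p) + 1

lemma Wf_continuous (p : ℂ) (φ₀ : ℝ) : Continuous (Wf p φ₀) := by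
  unfold Wf; fun_prop

lemma Wf_sub (p : ℂ) (φ₀ : ℝ) (z w : ℂ) :
    ‖Wf p φ₀ z - Wf p φ₀ w‖ = ‖z - w‖ := by
  unfold Wf
  rw [show Complex.exp ((-φ₀ : ℝ) * Complex.I) * (z - p) + 1
      - (Complex.exp ((-φ₀ : ℝ) * Complex.I) * (w - p) + 1)
      = Complex.exp ((-φ₀ : ℝ) * Complex.I) * (z - w) by ring]
  rw [norm_mul, Complex.norm_exp_ofReal_mul_I, one_mul]

lemma Wf_abs_ge (p : ℂ) (φ₀ : ℝ) (z : ℂ) :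
    ‖z - p‖ - 1 ≤ ‖Wf p φ₀ z‖ := by
  have h : ‖Complex.exp ((-φ₀ : ℝ) * Complex.I) * (z - p)‖
      = ‖z - p‖ := by
    rw [norm_mul, Complex.norm_exp_ofReal_mul_I, one_mul]
  calc ‖z - p‖ - 1
      = ‖Complex.exp ((-φ₀ : ℝ) * Complex.I) * (z - p)‖ - ‖-(1:ℂ)‖ := by
        rw [h]; simp
    _ ≤ ‖Complex.exp ((-φ₀ : ℝ) * Complex.I) * (z - p) - (-1)‖ := by
        simpa using
          norm_sub_norm_le (Complex.exp ((-φ₀ : ℝ) * Complex.I) * (z - p)) (-1 : ℂ)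
    _ = ‖Wf p φ₀ z‖ := by unfold Wf; ring_nf

lemma sector_margin (p : ℂ) (α β : ℝ) (hαβ : α ≤ β) (hangle : β - α < 2*Real.pi) :
    ∃ ρ : ℝ, 0 < ρ ∧ ∀ z ∈ closure (sector p α β),
      ρ ≤ max (Wf p ((α+β)/2) z).re |(Wf p ((α+β)/2) z).im| := by
  have hπ := Real.pi_pos
  set φ₀ := (α+β)/2 with hφ₀
  set γ := (β-α)/2 with hγdef
  have hγnn : 0 ≤ γ := by simp [hγdef]; linarith
  have hγπ : γ < Real.pi := by simp [hγdef]; linarith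
  set s : ℝ := if Real.pi/2 < γ then Real.sin γ else 1 with hs
  have hspos : 0 < s := by
    rw [hs]; split
    · exact Real.sin_pos_of_pos_of_lt_pi (by linarith) hγπ
    · norm_num
  refine ⟨(1/2) * min 1 s, by positivity, ?_⟩
  apply closure_minimal ?_ ?_
  · rintro z ⟨r, hr, θ, hθ, rfl⟩
    obtain ⟨hθ1, hθ2⟩ := hθ
    set ξ := θ - φ₀ with hξ
    have hξγ : |ξ| ≤ γ := by
      rw [abs_le, hξ, hφ₀, hγdef]; constructor <;> linarith
    show (1/2) * min 1 s ≤ max (Wf p φ₀ (p + r * Complex.exp (θ * Complex.I))).re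
      |(Wf p φ₀ (p + r * Complex.exp (θ * Complex.I))).im|
    have hW : Wf p φ₀ (p + r * Complex.exp (θ * Complex.I))
        = (r : ℂ) * Complex.exp ((ξ:ℝ) * Complex.I) + 1 := by
      unfold Wf
      rw [add_sub_cancel_left, show ((-φ₀:ℝ):ℂ) * Complex.I = -(φ₀:ℂ) * Complex.I by push_cast; ring]
      rw [mul_comm (Complex.exp _) ((r:ℂ) * _), mul_assoc, ← Complex.exp_add]
      congr 2
      push_cast [hξ]
      ring
    rw [hW]
    have hre : ((r : ℂ) * Complex.exp ((ξ:ℝ) * Complex.I) + 1).re = r * Real.cos ξ + 1 := by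
      simp [Complex.add_re, Complex.re_ofReal_mul, Complex.exp_ofReal_mul_I_re]
    have him : ((r : ℂ) * Complex.exp ((ξ:ℝ) * Complex.I) + 1).im = r * Real.sin ξ := by
      simp [Complex.add_im, Complex.im_ofReal_mul, Complex.exp_ofReal_mul_I_im]
    rw [hre, him]
    have hmin1 : min 1 s ≤ 1 := min_le_left _ _
    have hmins : min 1 s ≤ s := min_le_right _ _
    rcases le_or_gt 0 (Real.cos ξ) with hcos | hcos
    · refine le_max_of_le_left ?_
      nlinarith
    · -- cos ξ < 0, so π/2 < |ξ| ≤ γ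
      have hξpi2 : Real.pi/2 < |ξ| := by
        by_contra hcon
        push_neg at hcon
        have : 0 ≤ Real.cos |ξ| := Real.cos_nonneg_of_mem_Icc ⟨by linarith [abs_nonneg ξ], hcon⟩
        rw [Real.cos_abs] at this
        linarith
      have hγ2 : Real.pi/2 < γ := lt_of_lt_of_le hξpi2 hξγ
      have hsγ : s = Real.sin γ := by rw [hs, if_pos hγ2]
      rcases le_or_gt r (1/2) with hr2 | hr2
      · refine le_max_of_le_left ?_
        nlinarith [Real.neg_one_le_cos ξ]
      · refine le_max_of_le_right ?_
        have hsin : Real.sin γ ≤ Real.sin |ξ| := by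
          rw [← Real.sin_pi_sub γ, ← Real.sin_pi_sub |ξ|]
          exact Real.sin_le_sin_of_le_of_le_pi_div_two (by linarith) (by linarith) (by linarith)
        have h0 : 0 ≤ Real.sin |ξ| :=
          Real.sin_nonneg_of_nonneg_of_le_pi (abs_nonneg _) (by linarith)
        have habs2 : |Real.sin ξ| = Real.sin |ξ| := by
          rcases le_or_gt 0 ξ with h1 | h1
          · rw [_root_.abs_of_nonneg h1] at h0 ⊢
            exact _root_.abs_of_nonneg h0
          · rw [_root_.abs_of_neg h1, Real.sin_neg] at h0 ⊢
            rw [_root_.abs_of_nonpos (by linarith)]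
        have habs : |r * Real.sin ξ| = r * Real.sin |ξ| := by
          rw [abs_mul, _root_.abs_of_nonneg hr, habs2]
        rw [habs]
        have hsin0 : 0 < Real.sin γ := Real.sin_pos_of_pos_of_lt_pi (by linarith) hγπ
        nlinarith
  · have : Continuous fun z => max (Wf p φ₀ z).re |(Wf p φ₀ z).im| := by
      refine Continuous.max ?_ ?_
      · exact Complex.continuous_re.comp (Wf_continuous p φ₀)
      · exact (Complex.continuous_im.comp (Wf_continuous p φ₀)).abs
    exact isClosed_le continuous_const this




noncomputable def hfun (p : ℂ) (φ₀ : ℝ) (z : ℂ) : ℝ :=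
  ((Wf p φ₀ z) ^ (((1:ℝ)/4 : ℝ) : ℂ)).re

lemma hfun_formula (p : ℂ) (φ₀ : ℝ) (z : ℂ) (hW : Wf p φ₀ z ≠ 0) :
    hfun p φ₀ z = Real.exp ((1/4) * Real.log (‖Wf p φ₀ z‖))
      * Real.cos ((1/4) * Complex.arg (Wf p φ₀ z)) := by
  unfold hfun
  rw [Complex.cpow_def_of_ne_zero hW, mul_comm (Complex.log _), Complex.exp_re]
  rw [Complex.re_ofReal_mul, Complex.im_ofReal_mul, Complex.log_re, Complex.log_im]

lemma cos_quarter_arg_ge (w : ℂ) : 1/2 ≤ Real.cos ((1/4) * Complex.arg w) := by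
  have h1 : |(1/4) * Complex.arg w| ≤ Real.pi/4 := by
    rw [abs_mul]
    have := Complex.abs_arg_le_pi w
    rw [show |(1/4 : ℝ)| = 1/4 by norm_num]
    linarith
  have h2 : Real.cos (Real.pi/4) ≤ Real.cos |(1/4) * Complex.arg w| := by
    apply Real.cos_le_cos_of_nonneg_of_le_pi (abs_nonneg _) (by linarith [Real.pi_pos]) h1
  rw [Real.cos_abs] at h2
  rw [Real.cos_pi_div_four] at h2
  nlinarith [Real.sq_sqrt (show (0:ℝ) ≤ 2 by norm_num), Real.sqrt_nonneg 2]

lemma hfun_nonneg (p : ℂ) (φ₀ : ℝ) (z : ℂ) : 0 ≤ hfun p φ₀ z := by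
  by_cases hW : Wf p φ₀ z = 0
  · unfold hfun
    rw [hW, Complex.zero_cpow (by norm_num : (((1:ℝ)/4 : ℝ) : ℂ) ≠ 0)]
    simp
  · rw [hfun_formula p φ₀ z hW]
    have := cos_quarter_arg_ge (Wf p φ₀ z)
    positivity

lemma hfun_ge (p : ℂ) (φ₀ : ℝ) (z : ℂ) (hW : Wf p φ₀ z ≠ 0) :
    (1/2) * Real.exp ((1/4) * Real.log (‖Wf p φ₀ z‖)) ≤ hfun p φ₀ z := by
  rw [hfun_formula p φ₀ z hW]
  have h1 := cos_quarter_arg_ge (Wf p φ₀ z)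
  have h2 : (0:ℝ) < Real.exp ((1/4) * Real.log (‖Wf p φ₀ z‖)) := Real.exp_pos _
  nlinarith

lemma Ffun_differentiableAt (p : ℂ) (φ₀ : ℝ) (z : ℂ) (hW : Wf p φ₀ z ∈ Complex.slitPlane) :
    DifferentiableAt ℂ (fun w => (Wf p φ₀ w) ^ (((1:ℝ)/4 : ℝ) : ℂ)) z := by
  apply DifferentiableAt.cpow ?_ (differentiableAt_const _) hW
  unfold Wf
  fun_prop

lemma hfun_continuousAt (p : ℂ) (φ₀ : ℝ) (z : ℂ) (hW : Wf p φ₀ z ∈ Complex.slitPlane) :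
    ContinuousAt (hfun p φ₀) z :=
  Complex.continuous_re.continuousAt.comp (Ffun_differentiableAt p φ₀ z hW).continuousAt

lemma interior_sector_self (p : ℂ) (α : ℝ) (z : ℂ) (hz : z ∈ interior (sector p α α)) :
    False := by
  obtain ⟨δ, hδ, hball⟩ := Metric.isOpen_iff.mp isOpen_interior z hz
  have hsub : Metric.ball z δ ⊆ sector p α α := hball.trans interior_subset
  have hz' : z + (δ/2 : ℝ) * (Complex.I * Complex.exp (α * Complex.I)) ∈ sector p α α := by
    apply hsub
    rw [Metric.mem_ball, dist_eq, add_sub_cancel_left]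
    rw [norm_mul, norm_mul, Complex.norm_I, Complex.norm_exp_ofReal_mul_I]
    simp [abs_of_pos hδ]
    linarith
  have hzs : z ∈ sector p α α := interior_subset hz
  obtain ⟨r, hr, θ, hθ, hrep⟩ := hzs
  obtain ⟨r', hr', θ', hθ', hrep'⟩ := hz'
  have hθα : θ = α := le_antisymm hθ.2 hθ.1
  have hθα' : θ' = α := le_antisymm hθ'.2 hθ'.1
  rw [hθα] at hrep
  rw [hθα', hrep] at hrep'
  have hexp : Complex.exp ((α:ℝ) * Complex.I) ≠ 0 := Complex.exp_ne_zero _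
  have hkey : ((r:ℂ) + (δ/2 : ℝ) * Complex.I) * Complex.exp ((α:ℝ) * Complex.I)
      = (r':ℂ) * Complex.exp ((α:ℝ) * Complex.I) := by
    linear_combination hrep'
  have h2 := mul_right_cancel₀ hexp hkey
  have h3 := congrArg Complex.im h2
  simp at h3
  linarith

lemma exists_R (C' ε d : ℝ) (hC' : 1 ≤ C') (hε : 0 < ε) :
    ∃ R : ℝ, 2 ≤ R ∧ d < R ∧
      C' * Real.log (2 + R) ≤ ε * ((1/2) * Real.exp ((1/4) * Real.log (R - 1))) := by
  have hlo := isLittleO_log_rpow_atTop (show (0:ℝ) < 1/4 by norm_num)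
  have hb := hlo.def (show (0:ℝ) < ε/(8*C') by positivity)
  have ht : Filter.Tendsto (fun R : ℝ => R - 1) Filter.atTop Filter.atTop :=
    Filter.tendsto_atTop_add_const_right _ _ Filter.tendsto_id
  have hev : ∀ᶠ R : ℝ in Filter.atTop,
      ‖Real.log (R - 1)‖ ≤ (ε/(8*C')) * ‖(R - 1) ^ ((1:ℝ)/4)‖ := ht.eventually hb
  obtain ⟨R, ⟨hRlog, hR4⟩, hR3⟩ :=
    ((hev.and (Filter.eventually_ge_atTop (4:ℝ))).and (Filter.eventually_gt_atTop d)).exists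
  refine ⟨R, by linarith, hR3, ?_⟩
  have hR1 : (1:ℝ) ≤ R - 1 := by linarith
  have hlogpos : 0 ≤ Real.log (R - 1) := Real.log_nonneg hR1
  have hrpow : (R - 1) ^ ((1:ℝ)/4) = Real.exp ((1/4) * Real.log (R - 1)) := by
    rw [Real.rpow_def_of_pos (by linarith), mul_comm]
  have hrnn : (0:ℝ) ≤ (R - 1) ^ ((1:ℝ)/4) := Real.rpow_nonneg (by linarith) _
  rw [Real.norm_eq_abs, Real.norm_eq_abs, _root_.abs_of_nonneg hlogpos,
    _root_.abs_of_nonneg hrnn] at hRlog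
  have hlog2R : Real.log (2 + R) ≤ 2 * Real.log (R - 1) := by
    have hsq : 2 + R ≤ (R - 1)^2 := by nlinarith
    calc Real.log (2 + R) ≤ Real.log ((R - 1)^2) :=
          Real.log_le_log (by linarith) hsq
      _ = 2 * Real.log (R - 1) := by
          rw [Real.log_pow]; push_cast; ring
  have hC'pos : (0:ℝ) < C' := by linarith
  rw [← hrpow]
  calc C' * Real.log (2 + R) ≤ C' * (2 * Real.log (R - 1)) := by nlinarith
    _ ≤ C' * (2 * ((ε/(8*C')) * (R - 1) ^ ((1:ℝ)/4))) := by nlinarith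
    _ = (ε/4) * (R - 1) ^ ((1:ℝ)/4) := by field_simp; ring
    _ ≤ ε * ((1/2) * (R - 1) ^ ((1:ℝ)/4)) := by nlinarith


/-- Phragmén–Lindelöf principle for sublogarithmic growth in a sector: a continuous
function, subharmonic on the interior of a closed sector `W` of opening angle `< 2π`,
nonpositive on the boundary of `W`, and of growth `O(log |z|)` in `W`, is nonpositive
throughout `W`. -/
theorem stmt12 (p : ℂ) (α β : ℝ) (hαβ : α ≤ β) (hangle : β - α < 2 * Real.pi)
    (u : ℂ → ℝ) (hu : Continuous u)
    (hsub : ∀ z ∈ interior (sector p α β), ∃ r₀ > 0, ∀ r : ℝ, 0 < r → r < r₀ →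
      u z ≤ circAvg u z r)
    (hbd : ∀ z ∈ frontier (sector p α β), u z ≤ 0)
    (hgrowth : ∃ C : ℝ, ∀ z ∈ sector p α β, u z ≤ C * Real.log (2 + ‖z - p‖)) :
    ∀ z ∈ sector p α β, u z ≤ 0 := by
  intro z₀ hz₀
  by_cases hz₀i : z₀ ∈ interior (sector p α β)
  swap
  · exact hbd z₀ ⟨subset_closure hz₀, hz₀i⟩
  -- interior nonempty forces α < β
  have hαβlt : α < β := by
    rcases eq_or_lt_of_le hαβ with heq | h
    · subst heq; exact absurd hz₀i (fun h => interior_sector_self p α z₀ h)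
    · exact h
  set φ₀ : ℝ := (α+β)/2 with hφ₀
  obtain ⟨ρ, hρ, hmarg⟩ := sector_margin p α β hαβ hangle
  obtain ⟨C, hC0⟩ := hgrowth
  set C' : ℝ := max C 1 with hC'def
  have hC'1 : (1:ℝ) ≤ C' := le_max_right _ _
  have hC : ∀ z ∈ sector p α β, u z ≤ C' * Real.log (2 + ‖z - p‖) := by
    intro z hz
    have hlog : 0 ≤ Real.log (2 + ‖z - p‖) :=
      Real.log_nonneg (by linarith [norm_nonneg (z - p)])
    calc u z ≤ C * Real.log (2 + ‖z - p‖) := hC0 z hz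
      _ ≤ C' * Real.log (2 + ‖z - p‖) :=
          mul_le_mul_of_nonneg_right (le_max_left _ _) hlog
  -- slitPlane membership near closure of sector
  have hslit : ∀ z ∈ closure (sector p α β), ∀ w : ℂ, ‖w - z‖ ≤ ρ/2 →
      Wf p φ₀ w ∈ Complex.slitPlane := by
    intro z hz w hw
    have hm := hmarg z hz
    have hd : ‖Wf p φ₀ w - Wf p φ₀ z‖ ≤ ρ/2 := by
      rw [Wf_sub]; exact hw
    rcases max_cases (Wf p φ₀ z).re |(Wf p φ₀ z).im| with ⟨hmx, _⟩ | ⟨hmx, _⟩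
    · left
      have h1 : |(Wf p φ₀ w - Wf p φ₀ z).re| ≤ ρ/2 :=
        le_trans (Complex.abs_re_le_norm _) hd
      rw [Complex.sub_re, abs_le] at h1
      rw [hmx] at hm
      linarith [h1.1]
    · right
      intro hzero
      have h1 : |(Wf p φ₀ w - Wf p φ₀ z).im| ≤ ρ/2 :=
        le_trans (Complex.abs_im_le_norm _) hd
      rw [Complex.sub_im, hzero, zero_sub, abs_neg] at h1
      rw [hmx] at hm
      linarith
  -- main estimate: for every ε > 0, u z₀ ≤ ε * hfun p φ₀ z₀
  have key : ∀ ε : ℝ, 0 < ε → u z₀ ≤ ε * hfun p φ₀ z₀ := by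
    intro ε hε
    obtain ⟨R, hR2, hRz, hRbig⟩ := exists_R C' ε (‖z₀ - p‖) hC'1 hε
    set v : ℂ → ℝ := fun z => u z - ε * hfun p φ₀ z with hvdef
    set K : Set ℂ := Metric.closedBall p R ∩ closure (sector p α β) with hKdef
    have hKc : IsCompact K := (isCompact_closedBall p R).inter_right isClosed_closure
    have hKslit : ∀ z ∈ K, Wf p φ₀ z ∈ Complex.slitPlane := by
      intro z hz
      refine hslit z hz.2 z ?_
      simp only [sub_self, norm_zero]
      positivity
    have hvcont : ContinuousOn v K := by
      intro z hz
      exact ((hu.continuousAt.sub (continuousAt_const.mul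
        (hfun_continuousAt p φ₀ z (hKslit z hz)))).continuousWithinAt)
    have hz₀K : z₀ ∈ K := by
      constructor
      · rw [Metric.mem_closedBall, Complex.dist_eq]; linarith
      · exact subset_closure hz₀
    obtain ⟨z₁, hz₁K, hz₁max⟩ := hKc.exists_isMaxOn ⟨z₀, hz₀K⟩ hvcont
    set A : Set ℂ := K ∩ v ⁻¹' {v z₁} with hAdef
    have hAclosed : IsClosed A :=
      hvcont.preimage_isClosed_of_isClosed hKc.isClosed isClosed_singleton
    have hAc : IsCompact A := hKc.of_isClosed_subset hAclosed inter_subset_left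
    obtain ⟨zs, hzsA, hzsmax⟩ := hAc.exists_isMaxOn (f := fun z => ‖z - p‖)
      ⟨z₁, hz₁K, rfl⟩ ((continuous_norm.comp (by fun_prop : Continuous fun z : ℂ => z - p)).continuousOn)
    obtain ⟨hzsK, hzsval⟩ := hzsA
    have hvzs : v zs = v z₁ := hzsval
    -- show v z₁ ≤ 0
    have hM : v z₁ ≤ 0 := by
      rw [← hvzs]
      by_cases hint : zs ∈ interior (sector p α β)
      · have hzsS : zs ∈ sector p α β := interior_subset hint
        rcases eq_or_lt_of_le (Metric.mem_closedBall.mp hzsK.1) with hdR | hdR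
        · -- on the outer arc
          have habs : ‖zs - p‖ = R := by rw [← Complex.dist_eq]; exact hdR
          have hWlow : R - 1 ≤ ‖Wf p φ₀ zs‖ := by
            have := Wf_abs_ge p φ₀ zs; rw [habs] at this; exact this
          have hWne : Wf p φ₀ zs ≠ 0 := by
            intro h; rw [h] at hWlow; simp at hWlow; linarith
          have hh1 : (1/2) * Real.exp ((1/4) * Real.log (R - 1)) ≤ hfun p φ₀ zs := by
            refine le_trans ?_ (hfun_ge p φ₀ zs hWne)
            have hlog : Real.log (R-1) ≤ Real.log (‖Wf p φ₀ zs‖) :=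
              Real.log_le_log (by linarith) hWlow
            have := Real.exp_le_exp.mpr (by linarith : (1/4) * Real.log (R-1) ≤ (1/4) * Real.log (‖Wf p φ₀ zs‖))
            linarith
          have hub := hC zs hzsS
          rw [habs] at hub
          simp only [hvdef]
          nlinarith
        · -- interior point strictly inside the ball : contradiction
          exfalso
          obtain ⟨r₁, hr₁, hball⟩ := Metric.isOpen_iff.mp isOpen_interior zs hint
          obtain ⟨r₀, hr₀, hsubm⟩ := hsub zs hint
          set r : ℝ := min (min (r₀/2) (ρ/2)) (min (r₁/2) ((R - dist zs p)/2)) with hrdef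
          have hrpos : 0 < r := by
            apply lt_min (lt_min (by linarith) (by linarith)) (lt_min (by linarith) (by linarith))
          have hrr₀ : r < r₀ := lt_of_le_of_lt ((min_le_left _ _).trans (min_le_left _ _)) (by linarith)
          have hrρ : r ≤ ρ/2 := (min_le_left _ _).trans (min_le_right _ _)
          have hrr₁ : r < r₁ := lt_of_le_of_lt ((min_le_right _ _).trans (min_le_left _ _)) (by linarith)
          have hrR : dist zs p + r < R := by
            have : r ≤ (R - dist zs p)/2 := (min_le_right _ _).trans (min_le_right _ _)
            linarith
          -- circle points are in K and in interior of sector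
          have hcirc : ∀ θ : ℝ, zs + (r:ℂ) * Complex.exp (θ * Complex.I) ∈ K ∧
              Wf p φ₀ (zs + (r:ℂ) * Complex.exp (θ * Complex.I)) ∈ Complex.slitPlane := by
            intro θ
            have hdist : ‖(zs + (r:ℂ) * Complex.exp (θ * Complex.I)) - zs‖ = r := by
              rw [add_sub_cancel_left, norm_mul, Complex.norm_exp_ofReal_mul_I,
                Complex.norm_real, Real.norm_eq_abs, _root_.abs_of_nonneg hrpos.le, mul_one]
            have hmem : zs + (r:ℂ) * Complex.exp (θ * Complex.I) ∈ interior (sector p α β) := by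
              apply hball
              rw [Metric.mem_ball, Complex.dist_eq, hdist]; exact hrr₁
            have hKmem : zs + (r:ℂ) * Complex.exp (θ * Complex.I) ∈ K := by
              constructor
              · rw [Metric.mem_closedBall]
                calc dist (zs + (r:ℂ) * Complex.exp (θ * Complex.I)) p
                    ≤ dist (zs + (r:ℂ) * Complex.exp (θ * Complex.I)) zs + dist zs p :=
                      dist_triangle _ _ _
                  _ ≤ r + dist zs p := by rw [Complex.dist_eq, hdist]
                  _ ≤ R := by linarith
              · exact subset_closure (interior_subset hmem)
            refine ⟨hKmem, ?_⟩
            apply hslit zs (subset_closure (interior_subset hint))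
            rw [hdist]; exact hrρ
          -- mean value for hfun on the small circle
          have hclosure_zs : zs ∈ closure (sector p α β) :=
            subset_closure (interior_subset hint)
          have hF : ∀ w ∈ Metric.closedBall zs r, DifferentiableAt ℂ
              (fun w => (Wf p φ₀ w) ^ (((1:ℝ)/4 : ℝ) : ℂ)) w := by
            intro w hw
            apply Ffun_differentiableAt
            apply hslit zs hclosure_zs
            rw [← Complex.dist_eq]
            exact le_trans (Metric.mem_closedBall.mp hw) hrρ
          have hmean : circAvg (hfun p φ₀) zs r = hfun p φ₀ zs :=
            circAvg_of_holo hrpos hF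
          have hcont_u : Continuous (fun θ : ℝ => u (zs + (r:ℂ) * Complex.exp (θ * Complex.I))) :=
            hu.comp (circleFun_continuous zs r)
          have hcont_h : Continuous (fun θ : ℝ => hfun p φ₀ (zs + (r:ℂ) * Complex.exp (θ * Complex.I))) := by
            rw [continuous_iff_continuousAt]; intro θ
            exact ContinuousAt.comp (x := θ) (g := hfun p φ₀)
              (hfun_continuousAt p φ₀ _ (hcirc θ).2) (circleFun_continuous zs r).continuousAt
          have havg : circAvg v zs r = circAvg u zs r - ε * circAvg (hfun p φ₀) zs r := by
            unfold circAvg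
            rw [show (fun θ : ℝ => v (zs + (r:ℂ) * Complex.exp (θ * Complex.I)))
                = fun θ : ℝ => u (zs + (r:ℂ) * Complex.exp (θ * Complex.I))
                  - ε * hfun p φ₀ (zs + (r:ℂ) * Complex.exp (θ * Complex.I)) from rfl]
            rw [intervalIntegral.integral_sub
              (g := fun θ : ℝ => ε * hfun p φ₀ (zs + (r:ℂ) * Complex.exp (θ * Complex.I)))
              (hcont_u.intervalIntegrable _ _)
              ((continuous_const.mul hcont_h).intervalIntegrable _ _),
              intervalIntegral.integral_const_mul]
            ring
          have hsubv : v zs ≤ circAvg v zs r := by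
            have h1 := hsubm r hrpos hrr₀
            rw [havg, hmean]
            simp only [hvdef]
            linarith
          -- strictness via the farthest point of the circle
          set f : ℝ → ℝ := fun θ => v (zs + (r:ℂ) * Complex.exp (θ * Complex.I)) with hfdef
          have hfper : Function.Periodic f (2*Real.pi) := by
            intro θ
            have hexp2 : Complex.exp (((θ + 2*Real.pi : ℝ) : ℂ) * Complex.I)
                = Complex.exp ((θ:ℝ) * Complex.I) := by
              push_cast
              rw [add_mul, Complex.exp_add, Complex.exp_two_pi_mul_I, mul_one]
            simp only [hfdef]
            rw [hexp2]
          have hfcont : Continuous f := hcont_u.sub (continuous_const.mul hcont_h)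
          have hfle : ∀ θ, f θ ≤ v z₁ := fun θ => isMaxOn_iff.mp hz₁max _ (hcirc θ).1
          set d : ℂ := if zs = p then 1 else (zs - p) * ((((‖zs - p‖)⁻¹ : ℝ)) : ℂ) with hddef
          have habs_d : ‖d‖ = 1 := by
            rw [hddef]
            split
            · simp
            · rename_i hzp
              have : ‖zs - p‖ ≠ 0 := by
                simpa [sub_eq_zero] using hzp
              rw [norm_mul, Complex.norm_real, Real.norm_eq_abs, abs_inv, _root_.abs_of_nonneg (norm_nonneg _)]
              field_simp
          have hw₀abs : ‖zs + (r:ℂ) * d - p‖ = ‖zs - p‖ + r := by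
            rw [hddef]
            split
            · rename_i hzp
              subst hzp
              simp [norm_mul, Complex.norm_real, _root_.abs_of_nonneg hrpos.le]
            · rename_i hzp
              have habsne : ‖zs - p‖ ≠ 0 := by simpa [sub_eq_zero] using hzp
              have habspos : 0 < ‖zs - p‖ := lt_of_le_of_ne (norm_nonneg _) (Ne.symm habsne)
              have heq : zs + (r:ℂ) * ((zs - p) * ((((‖zs - p‖)⁻¹ : ℝ)) : ℂ)) - p
                  = (zs - p) * (1 + (r:ℂ) * ((((‖zs - p‖)⁻¹ : ℝ)) : ℂ)) := by ring
              rw [heq, norm_mul]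
              have h1 : ‖1 + (r:ℂ) * ((((‖zs - p‖)⁻¹ : ℝ)) : ℂ)‖
                  = 1 + r * (‖zs - p‖)⁻¹ := by
                rw [show (1 : ℂ) + (r:ℂ) * ((((‖zs - p‖)⁻¹ : ℝ)) : ℂ)
                    = (((1 + r * (‖zs - p‖)⁻¹ : ℝ)) : ℂ) by push_cast; ring]
                rw [Complex.norm_real, Real.norm_eq_abs, _root_.abs_of_nonneg (by positivity)]
              rw [h1]
              field_simp
          set θhat : ℝ := Complex.arg d with hθhat
          have hexpd : Complex.exp ((θhat : ℂ) * Complex.I) = d := by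
            have := Complex.norm_mul_exp_arg_mul_I d
            rw [habs_d] at this
            simpa using this
          have hw₀K : zs + (r:ℂ) * d ∈ K := by
            have := (hcirc θhat).1
            rwa [hexpd] at this
          have hfθhat : f θhat < v z₁ := by
            simp only [hfdef]
            rw [hexpd]
            rcases lt_or_ge (v (zs + (r:ℂ) * d)) (v z₁) with h | h
            · exact h
            exfalso
            have heq : v (zs + (r:ℂ) * d) = v z₁ :=
              le_antisymm (isMaxOn_iff.mp hz₁max _ hw₀K) h
            have hmem : zs + (r:ℂ) * d ∈ A := ⟨hw₀K, heq⟩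
            have := isMaxOn_iff.mp hzsmax _ hmem
            rw [hw₀abs] at this
            linarith
          have hstrict := strict_avg hfcont hfper hfle hfθhat
          have hlt : circAvg v zs r < v z₁ := by
            unfold circAvg
            have h2π : 0 < 2 * Real.pi := by positivity
            calc (1 / (2 * Real.pi)) * ∫ θ in (0:ℝ)..(2 * Real.pi),
                  v (zs + (r:ℂ) * Complex.exp (θ * Complex.I))
                < (1 / (2 * Real.pi)) * (2 * Real.pi * v z₁) := by
                  apply mul_lt_mul_of_pos_left _ (by positivity)
                  exact hstrict
              _ = v z₁ := by field_simp
          rw [hvzs] at hsubv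
          linarith
      · -- zs on the frontier
        have hfr : zs ∈ frontier (sector p α β) := ⟨hzsK.2, hint⟩
        have h1 := hbd zs hfr
        have h2 := hfun_nonneg p φ₀ zs
        simp only [hvdef]
        nlinarith
    have hvz₀ : v z₀ ≤ v z₁ := isMaxOn_iff.mp hz₁max _ hz₀K
    have hfin : v z₀ ≤ 0 := le_trans hvz₀ hM
    simp only [hvdef] at hfin
    linarith
  -- conclude
  have hfnn := hfun_nonneg p φ₀ z₀
  by_contra hcon
  push_neg at hcon
  have := key (u z₀ / (2 * (hfun p φ₀ z₀ + 1))) (by positivity)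
  have h2 : u z₀ / (2 * (hfun p φ₀ z₀ + 1)) * hfun p φ₀ z₀ < u z₀ := by
    rw [div_mul_eq_mul_div, div_lt_iff₀ (by positivity)]
    nlinarith
  linarith
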